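/- Let A, B, C, Q, a, b, c, d, x, y be integers with d = b² - ac = -27C²D, f = ax² + 2bxy + cy², α = A/Q, β = B/(CQ) integers with gcd(α, β) = 1, γ = gcd(y, β), β₁ = β/γ, y₁ = y/γ. Then with M = β₁(ax+by) - 3y₁α(1+2ω) in ℤ[ω], one has γ²·N(M) = β²(ax+by)² + 27y²α², and consequently N(M) ≡ 27y₁²·(A² - B²D)/Q² (mod a·f). -/

import Mathlib

open Polynomial

noncomputable section

/-- The Eisenstein integers `ℤ[ω] = ℤ[X]/(X² + X + 1)`. -/
abbrev Eis : Type := AdjoinRoot (X ^ 2 + X + 1 : ℤ[X])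

/-- The primitive cube root of unity `ω` in `ℤ[ω]`. -/
noncomputable def eisω : Eis := AdjoinRoot.root _

/-- The norm `ℤ[ω] → ℤ`. -/
noncomputable def eisNorm : Eis →* ℤ := Algebra.norm ℤ

lemma eis_monic : (X ^ 2 + X + 1 : ℤ[X]).Monic := by monicity!

lemma eisNorm_def (r s : ℤ) : eisNorm ((r : Eis) + (s : Eis) * eisω) = r^2 - r*s + s^2 := by
  have hg := eis_monic
  have hdeg : (X ^ 2 + X + 1 : ℤ[X]).natDegree = 2 := by compute_degree!
  have hdeg' : (X ^ 2 + X + 1 : ℤ[X]).degree = 2 := by compute_degree!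
  set b := (AdjoinRoot.powerBasisAux' hg).reindex (finCongr hdeg) with hb
  rw [show eisNorm = (Algebra.norm ℤ : Eis →* ℤ) from rfl]
  rw [Algebra.norm_eq_matrix_det b, Matrix.det_fin_two]
  have hpow := (AdjoinRoot.powerBasis' hg).basis_eq_pow
  have h0 : (AdjoinRoot.powerBasisAux' hg) ((finCongr hdeg).symm 0) = 1 := by
    refine (hpow _).trans ?_
    norm_num
  have h1 : (AdjoinRoot.powerBasisAux' hg) ((finCongr hdeg).symm 1) =
      AdjoinRoot.root (X ^ 2 + X + 1 : ℤ[X]) := by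
    refine (hpow _).trans ?_
    norm_num [AdjoinRoot.powerBasis']
  have key : ∀ p : ℤ[X], ((r : Eis) + (s : Eis) * eisω) * AdjoinRoot.mk _ p
      = AdjoinRoot.mk _ ((C r + C s * X) * p) := by
    intro p
    rw [map_mul, map_add, map_mul, AdjoinRoot.mk_C, AdjoinRoot.mk_C, AdjoinRoot.mk_X]
    simp [eisω, algebraMap_int_eq, eq_intCast]
  have e0 : ((r : Eis) + (s : Eis) * eisω) * (AdjoinRoot.powerBasisAux' hg) ((finCongr hdeg).symm 0)
      = AdjoinRoot.mk _ (C r + C s * X) := by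
    rw [h0, show (1 : Eis) = AdjoinRoot.mk _ 1 from rfl, key]; ring_nf
  have e1 : ((r : Eis) + (s : Eis) * eisω) * (AdjoinRoot.powerBasisAux' hg) ((finCongr hdeg).symm 1)
      = AdjoinRoot.mk _ ((C r + C s * X) * X) := by
    rw [h1, ← AdjoinRoot.mk_X, key]
  have m0 : AdjoinRoot.modByMonicHom hg (AdjoinRoot.mk _ (C r + C s * X)) = C r + C s * X := by
    rw [AdjoinRoot.modByMonicHom_mk]
    rw [(modByMonic_eq_self_iff hg).mpr]
    calc (C r + C s * X).degree ≤ 1 := by compute_degree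
      _ < (X ^ 2 + X + 1 : ℤ[X]).degree := by rw [hdeg']; norm_num
  have m1 : AdjoinRoot.modByMonicHom hg (AdjoinRoot.mk _ ((C r + C s * X) * X))
      = C (-s) + C (r - s) * X := by
    rw [AdjoinRoot.modByMonicHom_mk]
    have : (C r + C s * X) * X = C s * (X ^ 2 + X + 1) + (C (-s) + C (r - s) * X) := by
      simp only [C_sub, C_neg]; ring
    rw [this, add_modByMonic, (modByMonic_eq_zero_iff_dvd hg).mpr ⟨C s, mul_comm _ _⟩, zero_add,
      (modByMonic_eq_self_iff hg).mpr]
    calc (C (-s) + C (r - s) * X).degree ≤ 1 := by compute_degree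
      _ < (X ^ 2 + X + 1 : ℤ[X]).degree := by rw [hdeg']; norm_num
  simp only [Algebra.leftMulMatrix_eq_repr_mul, Module.Basis.repr_reindex_apply, hb,
    Module.Basis.reindex_apply, AdjoinRoot.powerBasisAux'_repr_apply_to_fun, e0, e1, m0, m1]
  have c1 : ∀ t : ℤ, ((t : ℤ[X])).coeff 1 = 0 := fun t => by
    rw [← C_eq_intCast, coeff_C]; norm_num
  norm_num [coeff_add, coeff_C_mul, coeff_C, coeff_X_zero, coeff_X_one, Fin.coe_cast, c1]
  ring

/-- Let `d = b² - ac = -27C²D`, `f = ax² + 2bxy + cy²`, `α = A/Q`, `β = B/(CQ)`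
with `gcd(α, β) = 1`, `γ = gcd(y, β)`, `β₁ = β/γ`, `y₁ = y/γ`.  Then for
`M = β₁(ax + by) - 3y₁α(1 + 2ω)` in `ℤ[ω]` one has
`γ²·N(M) = β²(ax + by)² + 27y²α²`, and consequently
`N(M) ≡ 27y₁²·(A² - B²D)/Q² (mod a·f)`. -/
theorem stmt_19 (A B C D Q a b c d x y f α β γ β₁ y₁ : ℤ)
    (hD : 0 < D) (hd : d = b ^ 2 - a * c) (hd' : d = -27 * C ^ 2 * D)
    (hf : f = a * x ^ 2 + 2 * b * x * y + c * y ^ 2)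
    (hα : A = Q * α) (hβ : B = C * Q * β) (hαβ : IsCoprime α β)
    (hγ : γ = (Int.gcd y β : ℤ)) (hβ₁ : β = γ * β₁) (hy₁ : y = γ * y₁)
    (hγf : IsCoprime γ (a * f)) :
    ∀ M : Eis, M = (β₁ : Eis) * ((a : Eis) * x + b * y) -
        3 * (y₁ : Eis) * (α : Eis) * (1 + 2 * eisω) →
      γ ^ 2 * eisNorm M = β ^ 2 * (a * x + b * y) ^ 2 + 27 * y ^ 2 * α ^ 2 ∧
        (a * f) ∣ (eisNorm M - 27 * y₁ ^ 2 * (α ^ 2 - β ^ 2 * C ^ 2 * D)) := by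
  intro M hM
  have hM' : M = ((β₁ * (a * x + b * y) - 3 * (y₁ * α) : ℤ) : Eis) +
      ((-(6 * (y₁ * α)) : ℤ) : Eis) * eisω := by
    rw [hM]; push_cast; ring
  have hN : eisNorm M = β₁ ^ 2 * (a * x + b * y) ^ 2 + 27 * (y₁ * α) ^ 2 := by
    rw [hM', eisNorm_def]; ring
  have hac : b ^ 2 - a * c = -27 * C ^ 2 * D := by rw [← hd, hd']
  subst hβ₁ hy₁
  constructor
  · rw [hN]; ring
  · exact ⟨β₁ ^ 2, by rw [hN, hf]; linear_combination (γ ^ 2 * y₁ ^ 2 * β₁ ^ 2) * hac⟩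

end
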